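/- For every x ∈ X, H({x}) > 0 if and only if liminf_{r→0} μ(B(x,r))/r > 0. -/
import Mathlib


open MeasureTheory Metric Set Filter Topology
open scoped ENNReal NNReal

noncomputable section

universe u

variable {X : Type u} [MetricSpace X] [MeasurableSpace X]

/-- The doubling condition: `0 < μ(B(x,2r)) ≤ C_d · μ(B(x,r)) < ∞` for every ball. -/
def IsDoubling (μ : Measure X) (Cd : ℝ≥0∞) : Prop :=
  ∀ (x : X) (r : ℝ), 0 < r →
    0 < μ (ball x (2 * r)) ∧ μ (ball x (2 * r)) ≤ Cd * μ (ball x r) ∧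
      Cd * μ (ball x r) < ⊤

/-- The codimension-one restricted Hausdorff content `H_R(A)`. -/
def codimHContent (μ : Measure X) (R : ℝ) (A : Set X) : ℝ≥0∞ :=
  ⨅ (c : ℕ → X × ℝ) (_ : A ⊆ ⋃ i, ball (c i).1 (c i).2) (_ : ∀ i, (c i).2 ≤ R),
    ∑' i, μ (ball (c i).1 (c i).2) / ENNReal.ofReal (c i).2

/-- The codimension-one Hausdorff measure `H(A) = lim_{R→0} H_R(A)`. -/
def codimH (μ : Measure X) (A : Set X) : ℝ≥0∞ :=
  ⨆ (R : ℝ) (_ : 0 < R), codimHContent μ R A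

/-- The restricted maximal function `M_R ν(x) = sup_{0<r≤R} r·ν(B(x,r))/μ(B(x,r))`. -/
def maximalFn (μ ν : Measure X) (R : ℝ) (x : X) : ℝ≥0∞ :=
  ⨆ (r : ℝ) (_ : 0 < r) (_ : r ≤ R),
    ENNReal.ofReal r * ν (ball x r) / μ (ball x r)

/-- `|s - t|` for extended-real numbers, interpreted as `∞` whenever at least one of
`s`, `t` is infinite. -/
def eAbsDiff (s t : EReal) : ℝ≥0∞ :=
  if s = ⊤ ∨ s = ⊥ ∨ t = ⊤ ∨ t = ⊥ then ⊤
  else ENNReal.ofReal |s.toReal - t.toReal|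

/-- `g` is an upper gradient of `u` in `Ω`: `g` is a nonnegative Borel function, and for every
nonconstant rectifiable curve `γ` in `Ω` (represented through its 1-Lipschitz (arc-length-type)
parametrizations on compact intervals) with endpoints `x,y` we have
`|u(x) - u(y)| ≤ ∫_γ g ds`. -/
def IsUpperGradientOn (g : X → ℝ≥0∞) (u : X → EReal) (Ω : Set X) : Prop :=
  Measurable g ∧
    ∀ (a b : ℝ), a ≤ b → ∀ γ : ℝ → X, LipschitzOnWith 1 γ (Set.Icc a b) →
      (∀ t ∈ Set.Icc a b, γ t ∈ Ω) →
      (∃ s ∈ Set.Icc a b, γ s ≠ γ a) →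
      eAbsDiff (u (γ a)) (u (γ b)) ≤ ∫⁻ t in Set.Icc a b, g (γ t)

/-- The Newtonian `N^{1,1}` (extended) norm:
`‖u‖_{N^{1,1}} = ‖u‖_{L¹} + inf ‖g‖_{L¹}` over upper gradients `g` of `u`. -/
def eN11 (μ : Measure X) (u : X → ℝ) : ℝ≥0∞ :=
  (∫⁻ x, ENNReal.ofReal |u x| ∂μ) +
    ⨅ (g : X → ℝ≥0∞) (_ : IsUpperGradientOn g (fun x => (u x : EReal)) Set.univ),
      ∫⁻ x, g x ∂μ

/-- The 1-capacity `capa₁(A) = inf ‖u‖_{N^{1,1}(X)}` over `u ∈ N^{1,1}(X)` with `u ≥ 1` on `A`. -/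
def capa1 (μ : Measure X) (A : Set X) : ℝ≥0∞ :=
  ⨅ (u : X → ℝ) (_ : ∀ x ∈ A, 1 ≤ u x), eN11 μ u

/-- The variational 1-capacity `rcapa₁(A,D) = inf ∫_X g_u dμ` over `u ∈ N^{1,1}(X)` with
`u ≥ 1` on `A` and `u = 0` on `X ∖ D`, and upper gradients `g_u` of `u`. -/
def rcapa1 (μ : Measure X) (A D : Set X) : ℝ≥0∞ :=
  ⨅ (u : X → ℝ) (_ : eN11 μ u < ⊤) (_ : ∀ x ∈ A, 1 ≤ u x)
    (_ : ∀ x, x ∉ D → u x = 0)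
    (g : X → ℝ≥0∞) (_ : IsUpperGradientOn g (fun x => (u x : EReal)) Set.univ),
    ∫⁻ x, g x ∂μ

/-- The `(1,1)`-Poincaré inequality:
`⨍_{B(x,r)} |u - u_{B(x,r)}| dμ ≤ C_P · r · ⨍_{B(x,λr)} g dμ`. -/
def PoincareIneq (μ : Measure X) (CP : ℝ≥0∞) (lam : ℝ) : Prop :=
  ∀ (x : X) (r : ℝ), 0 < r → ∀ (u : X → ℝ) (g : X → ℝ≥0∞),
    LocallyIntegrable u μ →
    IsUpperGradientOn g (fun y => (u y : EReal)) Set.univ →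
    (∫⁻ y in ball x r, ENNReal.ofReal |u y - ⨍ z in ball x r, u z ∂μ| ∂μ) / μ (ball x r)
      ≤ CP * ENNReal.ofReal r *
        ((∫⁻ y in ball x (lam * r), g y ∂μ) / μ (ball x (lam * r)))

/-- `A` is 1-thin at `x`:
`lim_{r→0} r · rcapa₁(A ∩ B(x,r), B(x,2r)) / μ(B(x,r)) = 0`. -/
def OneThin (μ : Measure X) (A : Set X) (x : X) : Prop :=
  Tendsto (fun r : ℝ =>
      ENNReal.ofReal r * rcapa1 μ (A ∩ ball x r) (ball x (2 * r)) / μ (ball x r))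
    (𝓝[>] 0) (𝓝 0)

/-- The 1-base `b₁ A`: the set of points where `A` is 1-thick (not 1-thin). -/
def OneBase (μ : Measure X) (A : Set X) : Set X := {x | ¬ OneThin μ A x}

/-- `U` is 1-finely open if `X ∖ U` is 1-thin at every point of `U`. -/
def OneFinelyOpen (μ : Measure X) (U : Set X) : Prop := ∀ x ∈ U, OneThin μ Uᶜ x

/-- `U` is 1-quasiopen if for every `ε > 0` there is an open `G` with `capa₁(G) < ε`
such that `U ∪ G` is open. -/
def OneQuasiopen (μ : Measure X) (U : Set X) : Prop :=
  ∀ ε : ℝ, 0 < ε → ∃ G : Set X, IsOpen G ∧ capa1 μ G < ENNReal.ofReal ε ∧ IsOpen (U ∪ G)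

/-- The 1-fine closure of `D`: the smallest 1-finely closed set containing `D`. -/
def OneFineClosure (μ : Measure X) (D : Set X) : Set X :=
  ⋂₀ {F : Set X | D ⊆ F ∧ OneFinelyOpen μ Fᶜ}

/-- `u` is Lipschitz in every open set compactly contained in `Ω`. -/
def LipschitzLocOn (u : X → ℝ) (Ω : Set X) : Prop :=
  ∀ Ω' : Set X, IsOpen Ω' → IsCompact (closure Ω') → closure Ω' ⊆ Ω →
    ∃ K : ℝ≥0, LipschitzOnWith K u Ω'

/-- `v i → u` in `L¹_loc(Ω)`. -/
def TendstoL1Loc (μ : Measure X) (Ω : Set X) (v : ℕ → X → ℝ) (u : X → ℝ) : Prop :=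
  ∀ K : Set X, K ⊆ Ω → IsCompact K →
    Tendsto (fun i => ∫⁻ x in K, ENNReal.ofReal |v i x - u x| ∂μ) atTop (𝓝 0)

/-- The total variation `‖Du‖(Ω)` of `u` in `Ω`. -/
def totalVar (μ : Measure X) (u : X → ℝ) (Ω : Set X) : ℝ≥0∞ :=
  ⨅ (v : ℕ → X → ℝ) (g : ℕ → X → ℝ≥0∞)
    (_ : ∀ i, LipschitzLocOn (v i) Ω)
    (_ : ∀ i, IsUpperGradientOn (g i) (fun x => (v i x : EReal)) Ω)
    (_ : TendstoL1Loc μ Ω v u),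
    liminf (fun i => ∫⁻ x in Ω, g i x ∂μ) atTop

/-- The (extended) BV norm `‖u‖_{BV(X)} = ‖u‖_{L¹(X)} + ‖Du‖(X)`. -/
def eBV (μ : Measure X) (u : X → ℝ) : ℝ≥0∞ :=
  (∫⁻ x, ENNReal.ofReal |u x| ∂μ) + totalVar μ u Set.univ

/-- `u ∈ BV(X)`: `u ∈ L¹(X)` and `‖Du‖(X) < ∞`. -/
def MemBV (μ : Measure X) (u : X → ℝ) : Prop := eBV μ u < ⊤

/-- The BV-capacity `capa_BV(A) = inf ‖u‖_{BV(X)}` over `u ∈ BV(X)` with `u ≥ 1`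
in a neighborhood of `A`. -/
def capaBV (μ : Measure X) (A : Set X) : ℝ≥0∞ :=
  ⨅ (u : X → ℝ) (_ : ∃ V : Set X, IsOpen V ∧ A ⊆ V ∧ ∀ x ∈ V, 1 ≤ u x), eBV μ u

/-- The lower approximate limit `u^∧(x)`. -/
def lowerApprox (μ : Measure X) (u : X → ℝ) (x : X) : EReal :=
  sSup ((fun s : ℝ => (s : EReal)) ''
    {s | Tendsto (fun r : ℝ => μ (ball x r ∩ {y | u y < s}) / μ (ball x r)) (𝓝[>] 0) (𝓝 0)})

/-- The support of a (μ-a.e. defined) function `u`. -/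
def suppOf (μ : Measure X) (u : X → ℝ) : Set X :=
  {x | ∀ r : ℝ, 0 < r → 0 < μ ({y | u y ≠ 0} ∩ ball x r)}

/-- One-ball cover bound: the content of a singleton is at most `μ(B(x,r))/r`. -/
lemma codimHContent_singleton_le (μ : Measure X) {R r : ℝ} (hr0 : 0 < r) (hrR : r ≤ R)
    (x : X) : codimHContent μ R {x} ≤ μ (ball x r) / ENNReal.ofReal r := by
  set c : ℕ → X × ℝ := fun i => if i = 0 then (x, r) else (x, 0) with hc
  have hcov : ({x} : Set X) ⊆ ⋃ i, ball (c i).1 (c i).2 := by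
    intro z hz
    rw [Set.mem_singleton_iff] at hz
    subst hz
    exact Set.mem_iUnion.2 ⟨0, by simp [hc, mem_ball_self hr0]⟩
  have hrad : ∀ i, (c i).2 ≤ R := by
    intro i
    by_cases h : i = 0 <;> simp [hc, h, hrR, hr0.le.trans hrR]
  refine le_trans (iInf_le_of_le c (iInf_le_of_le hcov (iInf_le_of_le hrad le_rfl))) ?_
  have : ∑' i, μ (ball (c i).1 (c i).2) / ENNReal.ofReal (c i).2
      = μ (ball x r) / ENNReal.ofReal r := by
    rw [tsum_eq_single 0]
    · simp [hc]
    · intro i hi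
      simp [hc, hi, Metric.ball_zero]
  exact this.le

/-- `H({x}) > 0` iff `liminf_{r→0} μ(B(x,r))/r > 0`. -/
theorem codimH_singleton_pos_iff {X : Type u} [MetricSpace X] [CompleteSpace X] [Nontrivial X]
    [MeasurableSpace X] [BorelSpace X] (μ : Measure X)
    (Cd : ℝ≥0∞) (hCd : 1 ≤ Cd) (hdoub : IsDoubling μ Cd) :
    ∀ x : X, 0 < codimH μ {x} ↔
      0 < liminf (fun r : ℝ => μ (ball x r) / ENNReal.ofReal r) (𝓝[>] 0) := by
  -- preliminary facts about `Cd`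
  have hCd0 : Cd ≠ 0 := by
    intro h; rw [h] at hCd; exact (by norm_num : ¬ (1:ℝ≥0∞) ≤ 0) hCd
  have hCdtop : Cd ≠ ⊤ := by
    intro h
    obtain ⟨x, y, -⟩ := exists_pair_ne X
    have h1 : 0 < μ (ball x 1) := by
      have := (hdoub x (1/2) (by norm_num)).1
      simpa [show (2:ℝ) * (1/2) = 1 by norm_num] using this
    have h2 := (hdoub x 1 one_pos).2.2
    rw [h, ENNReal.top_mul h1.ne'] at h2
    exact (lt_irrefl _ h2)
  intro x
  constructor
  · -- `H({x}) > 0 → liminf > 0`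
    intro h
    rw [codimH] at h
    obtain ⟨R, hR⟩ := lt_iSup_iff.1 h
    obtain ⟨hR0, hHR⟩ := lt_iSup_iff.1 hR
    refine lt_of_lt_of_le hHR (Filter.le_liminf_of_le (by isBoundedDefault) ?_)
    filter_upwards [Ioo_mem_nhdsGT_of_mem ⟨le_refl (0:ℝ), hR0⟩] with r hr
    exact codimHContent_singleton_le μ hr.1 hr.2.le x
  · -- `liminf > 0 → H({x}) > 0`
    intro h
    rw [Filter.liminf_eq] at h
    obtain ⟨a, ha, ha0⟩ := lt_sSup_iff.1 h
    rw [Set.mem_setOf_eq] at ha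
    obtain ⟨ε, hε, hsub⟩ := mem_nhdsGT_iff_exists_Ioo_subset.1 ha
    rw [Set.mem_Ioi] at hε
    have key : a / Cd ≤ codimHContent μ (ε / 2) {x} := by
      refine le_iInf fun c => le_iInf fun hcov => le_iInf fun hrad => ?_
      obtain ⟨i, hxi⟩ := Set.mem_iUnion.1 (hcov (Set.mem_singleton x))
      set y := (c i).1
      set r := (c i).2
      have hr0 : 0 < r := lt_of_le_of_lt dist_nonneg (mem_ball.1 hxi)
      have hrε : r < ε := lt_of_le_of_lt (hrad i) (by linarith)
      have haμ : a ≤ μ (ball x r) / ENNReal.ofReal r := hsub ⟨hr0, hrε⟩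
      have ht0 : ENNReal.ofReal r ≠ 0 := by
        simp [ENNReal.ofReal_eq_zero, not_le, hr0]
      have httop : ENNReal.ofReal r ≠ ⊤ := ENNReal.ofReal_ne_top
      have hsub2 : ball x r ⊆ ball y (2 * r) := by
        intro z hz
        rw [mem_ball] at hz ⊢
        calc dist z y ≤ dist z x + dist x y := dist_triangle z x y
          _ < r + r := add_lt_add hz (mem_ball.1 hxi)
          _ = 2 * r := (two_mul r).symm
      have h1 : a * ENNReal.ofReal r ≤ Cd * μ (ball y r) :=
        calc a * ENNReal.ofReal r ≤ μ (ball x r) :=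
              (ENNReal.le_div_iff_mul_le (Or.inl ht0) (Or.inl httop)).1 haμ
          _ ≤ μ (ball y (2 * r)) := measure_mono hsub2
          _ ≤ Cd * μ (ball y r) := (hdoub y r hr0).2.1
      have h2 : a / Cd * ENNReal.ofReal r ≤ μ (ball y r) := by
        rw [show a / Cd * ENNReal.ofReal r = a * ENNReal.ofReal r / Cd by
          rw [div_eq_mul_inv, div_eq_mul_inv, mul_right_comm],
          ENNReal.div_le_iff hCd0 hCdtop]
        exact h1.trans (le_of_eq (mul_comm _ _))
      have h3 : a / Cd ≤ μ (ball y r) / ENNReal.ofReal r :=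
        (ENNReal.le_div_iff_mul_le (Or.inl ht0) (Or.inl httop)).2 h2
      exact h3.trans (ENNReal.le_tsum i)
    have hpos : 0 < a / Cd := ENNReal.div_pos ha0.ne' hCdtop
    calc (0:ℝ≥0∞) < a / Cd := hpos
      _ ≤ codimHContent μ (ε / 2) {x} := key
      _ ≤ codimH μ {x} := le_iSup_of_le (ε / 2) (le_iSup_of_le (by linarith) le_rfl)

end
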